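/- Work in S = \mathbb{R}_{\geq 0}^d with \Gamma, S(ij), I, and interval vertex covers as in the edge-ideal setting: I = Up({ t e_i + t e_j : ij \in E, t \in S(ij) }) with E nonempty and each S(ij) \in \Omega. Then I = \bigcap_{(W,\sigma)} Q_{W,\sigma}, where the intersection is over all interval vertex covers (W, \sigma) of (\Gamma, S). Concretely: s \in I if and only if for every interval vertex cover (W,\sigma), there exists i \in W and a \in \sigma(i) with s_i \geq a. -/
import Mathlib


/-- The nonnegative orthant `S = ℝ_{≥0}^d`. -/
def Snn (d : ℕ) : Set (Fin d → ℝ) := {s | ∀ i, 0 ≤ s i}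

/-- The up-set of `T` in `ℝ_{≥0}^d`. -/
def UpN (d : ℕ) (T : Set (Fin d → ℝ)) : Set (Fin d → ℝ) :=
  {s | ∃ t ∈ T, ∃ u ∈ Snn d, s = t + u}

/-- `Ω = {(a,∞) : a ≥ 0} ∪ {[b,∞) : b > 0}`. -/
def IsOmega (A : Set ℝ) : Prop :=
  (∃ a : ℝ, 0 ≤ a ∧ A = Set.Ioi a) ∨ (∃ b : ℝ, 0 < b ∧ A = Set.Ici b)

/-- The ideal set `I = Up({t·eᵢ + t·eⱼ : ij ∈ E, t ∈ S(ij)})` of the weighted graph. -/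
def edgeIdealSet (d : ℕ) (G : SimpleGraph (Fin d)) (w : Fin d → Fin d → Set ℝ) :
    Set (Fin d → ℝ) :=
  UpN d {x | ∃ i j t, G.Adj i j ∧ t ∈ w i j ∧ x = Pi.single i t + Pi.single j t}

/-- `Q_{W,σ} = Up({a·eᵢ : i ∈ W, a ∈ σ(i)})`. -/
def QWsigma (d : ℕ) (W : Finset (Fin d)) (σ : Fin d → Set ℝ) : Set (Fin d → ℝ) :=
  UpN d {x | ∃ i ∈ W, ∃ a ∈ σ i, x = Pi.single i a}

/-- `(W,σ)` is an interval vertex cover of `(Γ, S)`. -/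
def IsIVC (d : ℕ) (G : SimpleGraph (Fin d)) (w : Fin d → Fin d → Set ℝ)
    (W : Finset (Fin d)) (σ : Fin d → Set ℝ) : Prop :=
  (∀ i j, G.Adj i j → i ∈ W ∨ j ∈ W) ∧
  (∀ i j, G.Adj i j → (i ∈ W ∧ w i j ⊆ σ i) ∨ (j ∈ W ∧ w i j ⊆ σ j))


lemma mem_edgeIdealSet_of (d : ℕ) (G : SimpleGraph (Fin d)) (w : Fin d → Fin d → Set ℝ)
    {s : Fin d → ℝ} (hs : s ∈ Snn d) {i j : Fin d} {t : ℝ}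
    (hadj : G.Adj i j) (ht : t ∈ w i j) (hi : t ≤ s i) (hj : t ≤ s j) :
    s ∈ edgeIdealSet d G w := by
  have hij : i ≠ j := hadj.ne
  refine ⟨Pi.single i t + Pi.single j t, ⟨i, j, t, hadj, ht, rfl⟩,
    fun k => s k - ((Pi.single i t + Pi.single j t : Fin d → ℝ)) k, ?_, ?_⟩
  · intro k
    by_cases hk : k = i
    · subst hk
      simp [Pi.single_apply, hij, sub_nonneg]
      simpa [Pi.single_apply, hij] using hi
    · by_cases hk2 : k = j
      · subst hk2
        simp [Pi.single_apply, hk, sub_nonneg]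
        simpa [Pi.single_apply, hk] using hj
      · simpa [Pi.single_apply, hk, hk2] using hs k
  · funext k; simp

/-- `I = ⋂_{(W,σ)} Q_{W,σ}` over all interval vertex covers:
for `s ∈ S`, `s ∈ I` iff every interval vertex cover `(W,σ)` admits `i ∈ W` and
`a ∈ σ(i)` with `s i ≥ a` (first equality of Theorem thm130513a). -/
theorem stmt19 (d : ℕ) (G : SimpleGraph (Fin d)) (hE : ∃ i j, G.Adj i j)
    (w : Fin d → Fin d → Set ℝ)
    (hw : ∀ i j, G.Adj i j → IsOmega (w i j)) (hwsymm : ∀ i j, w i j = w j i) :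
    ∀ s ∈ Snn d, (s ∈ edgeIdealSet d G w ↔
      ∀ (W : Finset (Fin d)) (σ : Fin d → Set ℝ), (∀ i ∈ W, IsOmega (σ i)) →
        IsIVC d G w W σ → ∃ i ∈ W, ∃ a ∈ σ i, a ≤ s i) := by
  intro s hs
  constructor
  · rintro ⟨x, ⟨i, j, t, hadj, ht, rfl⟩, u, hu, rfl⟩ W σ hσ hIVC
    have hij : i ≠ j := hadj.ne
    rcases hIVC.2 i j hadj with ⟨hiW, hsub⟩ | ⟨hjW, hsub⟩
    · refine ⟨i, hiW, t, hsub ht, ?_⟩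
      have : ((Pi.single i t + Pi.single j t + u : Fin d → ℝ)) i = t + u i := by
        simp [Pi.single_apply, hij]
      rw [this]; linarith [hu i]
    · refine ⟨j, hjW, t, hsub ht, ?_⟩
      have : ((Pi.single i t + Pi.single j t + u : Fin d → ℝ)) j = t + u j := by
        simp [Pi.single_apply, hij.symm]
      rw [this]; linarith [hu j]
  · intro h
    by_contra hsI
    have hIVC : IsIVC d G w Finset.univ (fun i => Set.Ioi (s i)) := by
      refine ⟨fun i j _ => Or.inl (Finset.mem_univ i), fun i j hadj => ?_⟩
      rcases le_total (s i) (s j) with hle | hle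
      · refine Or.inl ⟨Finset.mem_univ i, fun x hx => ?_⟩
        by_contra h'
        have hxi : x ≤ s i := not_lt.mp h'
        exact hsI (mem_edgeIdealSet_of d G w hs hadj hx hxi (hxi.trans hle))
      · refine Or.inr ⟨Finset.mem_univ j, fun x hx => ?_⟩
        by_contra h'
        have hxj : x ≤ s j := not_lt.mp h'
        exact hsI (mem_edgeIdealSet_of d G w hs hadj hx (hxj.trans hle) hxj)
    obtain ⟨i, -, a, ha, hale⟩ := h Finset.univ (fun i => Set.Ioi (s i))
      (fun i _ => Or.inl ⟨s i, hs i, rfl⟩) hIVC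
    exact absurd hale (not_le.mpr ha)
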